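/- Let B be a signed bipartite graph with sets E₀, E₁ and matrix M, and let L = R^{E₀⊔E₁} carry the σ-sesquilinear form ⟨x,y⟩ := ∑_{a,b} σ(x_a)·G(a,b)·y_b, where G is the q-Gram matrix of B. Let F_q(B) ⊆ L be the R-submodule spanned by the standard basis vectors {e_j : j ∈ E₁} (the q-flow lattice), and let C_q(B) ⊆ L be the R-submodule spanned by the vectors {ℓ_i : i ∈ E₀}, where ℓ_i := e_i + q²·∑_{i'∈E₀} (M·Mᵗ)(i',i)·e_{i'} − q·∑_{j∈E₁} M(i,j)·e_j (the q-cut lattice). Then C_q(B) = {y ∈ L : ⟨x,y⟩ = 0 for all x ∈ F_q(B)}, i.e. C_q(B) is the right orthogonal complement of F_q(B) in L, and F_q(B) = {x ∈ L : ⟨x,y⟩ = 0 for all y ∈ C_q(B)}, i.e. F_q(B) is the left orthogonal complement of C_q(B) in L. -/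

import Mathlib

open LaurentPolynomial Matrix

private lemma sigma_T (σ : LaurentPolynomial ℤ →+* LaurentPolynomial ℤ)
    (hσ : σ (T 1) = T (-1)) : ∀ n : ℤ, σ (T n) = T (-n) := by
  have hN : ∀ n : ℕ, σ (T (n : ℤ)) = T (-(n : ℤ)) := by
    intro n
    have h1 : (T ((n : ℤ)) : LaurentPolynomial ℤ) = T 1 ^ n := by
      rw [T_pow]; norm_num
    rw [h1, map_pow, hσ, T_pow]
    congr 1; ring
  intro n
  rcases le_or_gt 0 n with h | h
  · obtain ⟨k, rfl⟩ := Int.eq_ofNat_of_zero_le h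
    exact hN k
  · obtain ⟨k, rfl⟩ : ∃ k : ℕ, n = -(k : ℤ) := ⟨n.natAbs, by omega⟩
    have h1 : σ (T (-(k : ℤ))) * T (-(k : ℤ)) = 1 := by
      calc σ (T (-(k : ℤ))) * T (-(k : ℤ))
          = σ (T (-(k : ℤ))) * σ (T ((k : ℤ))) := by rw [hN k]
        _ = σ (T (-(k : ℤ)) * T ((k : ℤ))) := (_root_.map_mul σ _ _).symm
        _ = σ (T (-(k : ℤ) + (k : ℤ))) := by rw [← T_add]
        _ = 1 := by norm_num
    calc σ (T (-(k : ℤ)))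
        = σ (T (-(k : ℤ))) * (T (-(k : ℤ)) * T ((k : ℤ))) := by
          rw [← T_add]; norm_num
      _ = σ (T (-(k : ℤ))) * T (-(k : ℤ)) * T ((k : ℤ)) := by ring
      _ = T ((k : ℤ)) := by rw [h1, one_mul]
      _ = T (-(-(k : ℤ))) := by norm_num

private lemma sigma_eq_invert (σ : LaurentPolynomial ℤ →+* LaurentPolynomial ℤ)
    (hσ : σ (T 1) = T (-1)) (p : LaurentPolynomial ℤ) : σ p = invert p := by
  induction p using LaurentPolynomial.induction_on' with
  | add p q hp hq => rw [map_add, map_add, hp, hq]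
  | C_mul_T n a =>
    have hCa : σ (LaurentPolynomial.C a) = LaurentPolynomial.C a := by
      have h0 : (LaurentPolynomial.C a : LaurentPolynomial ℤ)
          = ((a : ℤ) : LaurentPolynomial ℤ) := eq_intCast _ a
      rw [h0, map_intCast]
    rw [_root_.map_mul, _root_.map_mul, hCa, invert_C, sigma_T σ hσ, invert_T]

private lemma sigma_inj (σ : LaurentPolynomial ℤ →+* LaurentPolynomial ℤ)
    (hσ : σ (T 1) = T (-1)) : Function.Injective σ := by
  intro p q h
  have h' : invert p = invert (R := ℤ) q := by
    rw [← sigma_eq_invert σ hσ p, ← sigma_eq_invert σ hσ q]; exact h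
  exact invert.injective h'

private noncomputable def mq {E₀ E₁ : Type} (M : Matrix E₀ E₁ ℤ) : Matrix E₀ E₁ (LaurentPolynomial ℤ) :=
  M.map (Int.cast : ℤ → LaurentPolynomial ℤ)

set_option maxHeartbeats 2000000 in
/-- Let `B` be a signed bipartite graph with parts `E₀, E₁` and signed
adjacency matrix `M`, and let `L = R^{E₀⊔E₁}` carry the σ-sesquilinear form given by the
q-Gram matrix `G = [[I, q·M],[q·Mᵗ, I + q²·Mᵗ·M]]`.  Let `F_q(B)` be the `R`-span of the
standard basis vectors indexed by `E₁` and `C_q(B)` the `R`-span of the vectors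
`ℓᵢ = eᵢ + q²·∑_{i'} (M·Mᵗ)(i',i)·e_{i'} − q·∑_j M(i,j)·e_j` for `i ∈ E₀`.  Then `C_q(B)`
is the right orthogonal complement of `F_q(B)` in `L`, and `F_q(B)` is the left orthogonal
complement of `C_q(B)` in `L`. -/
theorem stmt9 (E₀ E₁ : Type) [Fintype E₀] [Fintype E₁] [DecidableEq E₀] [DecidableEq E₁]
    (σ : LaurentPolynomial ℤ →+* LaurentPolynomial ℤ)
    (hσ : σ (T 1) = T (-1))
    (M : Matrix E₀ E₁ ℤ) (hM : ∀ i j, M i j = -1 ∨ M i j = 0 ∨ M i j = 1) :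
    let G : Matrix (E₀ ⊕ E₁) (E₀ ⊕ E₁) (LaurentPolynomial ℤ) :=
      Matrix.fromBlocks 1 ((T 1 : LaurentPolynomial ℤ) • M.map (Int.cast : ℤ → LaurentPolynomial ℤ))
        ((T 1 : LaurentPolynomial ℤ) • (M.map (Int.cast : ℤ → LaurentPolynomial ℤ)).transpose)
        (1 + (T 2 : LaurentPolynomial ℤ) •
          ((M.map (Int.cast : ℤ → LaurentPolynomial ℤ)).transpose *
            M.map (Int.cast : ℤ → LaurentPolynomial ℤ)))
    let form : ((E₀ ⊕ E₁) → LaurentPolynomial ℤ) → ((E₀ ⊕ E₁) → LaurentPolynomial ℤ) →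
        LaurentPolynomial ℤ := fun x y => ∑ a, ∑ b, σ (x a) * G a b * y b
    let Fq : Submodule (LaurentPolynomial ℤ) ((E₀ ⊕ E₁) → LaurentPolynomial ℤ) :=
      Submodule.span (LaurentPolynomial ℤ)
        (Set.range fun j : E₁ => Pi.single (Sum.inr j) (1 : LaurentPolynomial ℤ))
    let ℓ : E₀ → ((E₀ ⊕ E₁) → LaurentPolynomial ℤ) := fun i =>
      Sum.elim
        (fun i' : E₀ => (if i' = i then 1 else 0) +
          T 2 * (((M * M.transpose) i' i : ℤ) : LaurentPolynomial ℤ))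
        (fun j : E₁ => -(T 1 * ((M i j : ℤ) : LaurentPolynomial ℤ)))
    let Cq : Submodule (LaurentPolynomial ℤ) ((E₀ ⊕ E₁) → LaurentPolynomial ℤ) :=
      Submodule.span (LaurentPolynomial ℤ) (Set.range ℓ)
    (Cq : Set ((E₀ ⊕ E₁) → LaurentPolynomial ℤ)) = {y | ∀ x ∈ Fq, form x y = 0} ∧
    (Fq : Set ((E₀ ⊕ E₁) → LaurentPolynomial ℤ)) = {x | ∀ y ∈ Cq, form x y = 0} := by
  intro G form Fq ℓ Cq
  have h2 : (T 2 : LaurentPolynomial ℤ) = T 1 * T 1 := by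
    rw [← T_add]; norm_num
  have hG : G = Matrix.fromBlocks 1 ((T 1 : LaurentPolynomial ℤ) • mq M)
      ((T 1 : LaurentPolynomial ℤ) • (mq M).transpose)
      (1 + (T 2 : LaurentPolynomial ℤ) • ((mq M).transpose * mq M)) := rfl
  have hcast : ∀ i' i : E₀,
      (((M * M.transpose) i' i : ℤ) : LaurentPolynomial ℤ) = (mq M * (mq M).transpose) i' i := by
    intro i' i
    rw [Matrix.mul_apply, Matrix.mul_apply]
    push_cast
    exact Finset.sum_congr rfl fun j _ => by
      simp [mq, Matrix.map_apply, Matrix.transpose_apply]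
  -- ℓ i in terms of matrix-vector products
  have hℓl : ∀ i : E₀, (ℓ i) ∘ Sum.inl
      = (1 + (T 2 : LaurentPolynomial ℤ) • (mq M * (mq M).transpose)) *ᵥ Pi.single i 1 := by
    intro i
    funext i'
    show (if i' = i then 1 else 0) + T 2 * (((M * M.transpose) i' i : ℤ) : LaurentPolynomial ℤ) = _
    rw [hcast]
    simp [Matrix.mulVec_single, Matrix.add_apply, Matrix.one_apply, Matrix.smul_apply,
      smul_eq_mul]
  have hℓr : ∀ i : E₀, (ℓ i) ∘ Sum.inr
      = ((-(T 1) : LaurentPolynomial ℤ) • (mq M).transpose) *ᵥ Pi.single i 1 := by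
    intro i
    funext j
    show -(T 1 * ((M i j : ℤ) : LaurentPolynomial ℤ)) = _
    simp [mq, Matrix.mulVec_single, Matrix.smul_apply, Matrix.transpose_apply,
      Matrix.map_apply, smul_eq_mul]
  -- the key identity : G *ᵥ ℓ i = e_{inl i}
  have key : ∀ i : E₀, G *ᵥ ℓ i = Pi.single (Sum.inl i) (1 : LaurentPolynomial ℤ) := by
    intro i
    rw [hG, Matrix.fromBlocks_mulVec, hℓl, hℓr]
    have htop : (1 : Matrix E₀ E₀ (LaurentPolynomial ℤ)) *ᵥ
          ((1 + (T 2 : LaurentPolynomial ℤ) • (mq M * (mq M).transpose)) *ᵥ Pi.single i 1)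
        + ((T 1 : LaurentPolynomial ℤ) • mq M) *ᵥ
          (((-(T 1) : LaurentPolynomial ℤ) • (mq M).transpose) *ᵥ Pi.single i 1)
        = Pi.single i 1 := by
      simp only [Matrix.mulVec_mulVec]
      rw [← Matrix.add_mulVec]
      have hmat : (1 : Matrix E₀ E₀ (LaurentPolynomial ℤ)) *
            (1 + (T 2 : LaurentPolynomial ℤ) • (mq M * (mq M).transpose))
          + ((T 1 : LaurentPolynomial ℤ) • mq M) *
            ((-(T 1) : LaurentPolynomial ℤ) • (mq M).transpose) = 1 := by
        simp only [Matrix.one_mul, Matrix.smul_mul, Matrix.mul_smul, smul_smul, h2]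
        module
      rw [hmat, Matrix.one_mulVec]
    have hbot : ((T 1 : LaurentPolynomial ℤ) • (mq M).transpose) *ᵥ
          ((1 + (T 2 : LaurentPolynomial ℤ) • (mq M * (mq M).transpose)) *ᵥ Pi.single i 1)
        + (1 + (T 2 : LaurentPolynomial ℤ) • ((mq M).transpose * mq M)) *ᵥ
          (((-(T 1) : LaurentPolynomial ℤ) • (mq M).transpose) *ᵥ Pi.single i 1)
        = 0 := by
      simp only [Matrix.mulVec_mulVec]
      rw [← Matrix.add_mulVec]
      have hmat : ((T 1 : LaurentPolynomial ℤ) • (mq M).transpose) *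
            (1 + (T 2 : LaurentPolynomial ℤ) • (mq M * (mq M).transpose))
          + (1 + (T 2 : LaurentPolynomial ℤ) • ((mq M).transpose * mq M)) *
            ((-(T 1) : LaurentPolynomial ℤ) • (mq M).transpose) = 0 := by
        simp only [Matrix.mul_add, Matrix.add_mul, Matrix.mul_one, Matrix.one_mul,
          Matrix.smul_mul, Matrix.mul_smul, smul_smul, Matrix.mul_assoc, h2]
        module
      rw [hmat, Matrix.zero_mulVec]
    rw [htop, hbot]
    funext b
    cases b with
    | inl i' => simp [Pi.single_apply]
    | inr j => simp [Pi.single_apply]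
  -- the form in terms of G *ᵥ y
  have hform : ∀ x y, form x y = ∑ a, σ (x a) * (G *ᵥ y) a := by
    intro x y
    show (∑ a, ∑ b, σ (x a) * G a b * y b) = _
    refine Finset.sum_congr rfl fun a _ => ?_
    have hv : (G *ᵥ y) a = ∑ b, G a b * y b := rfl
    rw [hv, Finset.mul_sum]
    exact Finset.sum_congr rfl fun b _ => mul_assoc _ _ _
  have hx_single : ∀ (g : (E₀ ⊕ E₁) → LaurentPolynomial ℤ) (a₀ : E₀ ⊕ E₁),
      (∑ a, σ ((Pi.single a₀ (1 : LaurentPolynomial ℤ) : (E₀ ⊕ E₁) → LaurentPolynomial ℤ) a) * g a)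
        = g a₀ := by
    intro g a₀
    rw [Finset.sum_eq_single a₀]
    · simp
    · intro b _ hb
      rw [Pi.single_eq_of_ne hb, map_zero, zero_mul]
    · simp
  have hform_single : ∀ (j : E₁) y, form (Pi.single (Sum.inr j) 1) y = (G *ᵥ y) (Sum.inr j) :=
    fun j y => by rw [hform, hx_single]
  have hform_ell : ∀ x (i : E₀), form x (ℓ i) = σ (x (Sum.inl i)) := by
    intro x i
    rw [hform, key i]
    rw [Finset.sum_eq_single (Sum.inl i)]
    · simp
    · intro b _ hb
      rw [Pi.single_eq_of_ne hb, mul_zero]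
    · simp
  -- elements of Fq vanish on E₀ coordinates
  have hFq0 : ∀ x ∈ Fq, ∀ i : E₀, x (Sum.inl i) = 0 := by
    intro x hx i
    have hle : Fq ≤ LinearMap.ker
        (LinearMap.proj (R := LaurentPolynomial ℤ)
          (φ := fun _ : E₀ ⊕ E₁ => LaurentPolynomial ℤ) (Sum.inl i)) := by
      apply Submodule.span_le.mpr
      rintro _ ⟨j, rfl⟩
      simp only [SetLike.mem_coe, LinearMap.mem_ker, LinearMap.proj_apply]
      exact Pi.single_eq_of_ne (by simp) 1
    exact hle hx
  -- the bilinear vanishing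
  have hCform : ∀ x ∈ Fq, ∀ y ∈ Cq, form x y = 0 := by
    intro x hx
    let φx : ((E₀ ⊕ E₁) → LaurentPolynomial ℤ) →ₗ[LaurentPolynomial ℤ] LaurentPolynomial ℤ :=
      { toFun := fun y => ∑ a, σ (x a) * (G *ᵥ y) a
        map_add' := by
          intro y z
          simp [Matrix.mulVec_add, mul_add, Finset.sum_add_distrib]
        map_smul' := by
          intro r y
          simp only [Matrix.mulVec_smul, Pi.smul_apply, smul_eq_mul, RingHom.id_apply,
            Finset.mul_sum]
          exact Finset.sum_congr rfl fun a _ => by ring }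
    intro y hy
    have hle : Cq ≤ LinearMap.ker φx := by
      apply Submodule.span_le.mpr
      rintro _ ⟨i, rfl⟩
      have h1 : φx (ℓ i) = 0 := by
        show (∑ a, σ (x a) * (G *ᵥ ℓ i) a) = 0
        rw [← hform, hform_ell, hFq0 x hx i, map_zero]
      simpa only [SetLike.mem_coe, LinearMap.mem_ker] using h1
    have h2' : φx y = 0 := LinearMap.mem_ker.mp (hle hy)
    rw [hform]
    exact h2'
  constructor
  · apply Set.Subset.antisymm
    · intro y hy x hx
      exact hCform x hx y hy
    · intro y hy
      have hrow : ∀ j : E₁, (G *ᵥ y) (Sum.inr j) = 0 := by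
        intro j
        rw [← hform_single j y]
        exact hy _ (Submodule.subset_span ⟨j, rfl⟩)
      have hw : ((T 1 : LaurentPolynomial ℤ) • (mq M).transpose) *ᵥ (y ∘ Sum.inl)
          + (1 + (T 2 : LaurentPolynomial ℤ) • ((mq M).transpose * mq M)) *ᵥ (y ∘ Sum.inr)
          = 0 := by
        funext j
        have h3 := hrow j
        rw [hG, Matrix.fromBlocks_mulVec] at h3
        simpa using h3
      have hA : (1 + (T 2 : LaurentPolynomial ℤ) • (mq M * (mq M).transpose)) *ᵥ
          ((y ∘ Sum.inl) + (T 1 : LaurentPolynomial ℤ) • (mq M *ᵥ (y ∘ Sum.inr)))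
          = y ∘ Sum.inl := by
        have expand : (1 + (T 2 : LaurentPolynomial ℤ) • (mq M * (mq M).transpose)) *ᵥ
            ((y ∘ Sum.inl) + (T 1 : LaurentPolynomial ℤ) • (mq M *ᵥ (y ∘ Sum.inr)))
            = (y ∘ Sum.inl) + (T 1 : LaurentPolynomial ℤ) • (mq M *ᵥ
              (((T 1 : LaurentPolynomial ℤ) • (mq M).transpose) *ᵥ (y ∘ Sum.inl)
              + (1 + (T 2 : LaurentPolynomial ℤ) • ((mq M).transpose * mq M)) *ᵥ (y ∘ Sum.inr))) := by
          simp only [Matrix.mulVec_add, Matrix.add_mulVec, Matrix.mulVec_smul,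
            Matrix.smul_mulVec, Matrix.mulVec_mulVec, Matrix.one_mulVec,
            Matrix.add_mul, Matrix.one_mul, Matrix.smul_mul, Matrix.mul_smul,
            Matrix.mul_assoc, smul_smul, h2, smul_add]
          module
        rw [expand, hw]
        simp
      have hB : ((-(T 1) : LaurentPolynomial ℤ) • (mq M).transpose) *ᵥ
          ((y ∘ Sum.inl) + (T 1 : LaurentPolynomial ℤ) • (mq M *ᵥ (y ∘ Sum.inr)))
          = y ∘ Sum.inr := by
        have expand : ((-(T 1) : LaurentPolynomial ℤ) • (mq M).transpose) *ᵥ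
            ((y ∘ Sum.inl) + (T 1 : LaurentPolynomial ℤ) • (mq M *ᵥ (y ∘ Sum.inr)))
            = (y ∘ Sum.inr) - (((T 1 : LaurentPolynomial ℤ) • (mq M).transpose) *ᵥ (y ∘ Sum.inl)
              + (1 + (T 2 : LaurentPolynomial ℤ) • ((mq M).transpose * mq M)) *ᵥ (y ∘ Sum.inr)) := by
          simp only [Matrix.mulVec_add, Matrix.add_mulVec, Matrix.mulVec_smul,
            Matrix.smul_mulVec, Matrix.mulVec_mulVec, Matrix.one_mulVec,
            Matrix.add_mul, Matrix.one_mul, Matrix.smul_mul, Matrix.mul_smul,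
            Matrix.mul_assoc, smul_smul, h2, smul_add]
          module
        rw [expand, hw, sub_zero]
      set c : E₀ → LaurentPolynomial ℤ :=
        (y ∘ Sum.inl) + (T 1 : LaurentPolynomial ℤ) • (mq M *ᵥ (y ∘ Sum.inr)) with hc
      have hyc : y = ∑ i, c i • ℓ i := by
        funext b
        have h1 : (∑ i, c i • ℓ i) b = ∑ i, c i * ℓ i b := by
          simp [Finset.sum_apply, smul_eq_mul]
        rw [h1]
        symm
        cases b with
        | inl i' =>
          have hent : ∀ i, ℓ i (Sum.inl i')
              = ((1 + (T 2 : LaurentPolynomial ℤ) • (mq M * (mq M).transpose) :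
                  Matrix E₀ E₀ (LaurentPolynomial ℤ))) i' i := by
            intro i
            show (if i' = i then 1 else 0)
              + T 2 * (((M * M.transpose) i' i : ℤ) : LaurentPolynomial ℤ) = _
            rw [hcast]
            simp [Matrix.add_apply, Matrix.one_apply, Matrix.smul_apply, smul_eq_mul]
          calc (∑ i, c i * ℓ i (Sum.inl i'))
              = ∑ i, ((1 + (T 2 : LaurentPolynomial ℤ) • (mq M * (mq M).transpose) :
                  Matrix E₀ E₀ (LaurentPolynomial ℤ))) i' i * c i :=
                Finset.sum_congr rfl fun i _ => by rw [hent i, mul_comm]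
            _ = ((1 + (T 2 : LaurentPolynomial ℤ) • (mq M * (mq M).transpose)) *ᵥ c) i' := by
                simp [Matrix.mulVec, dotProduct]
            _ = (y ∘ Sum.inl) i' := by rw [hA]
            _ = y (Sum.inl i') := rfl
        | inr j =>
          have hent : ∀ i, ℓ i (Sum.inr j)
              = (((-(T 1) : LaurentPolynomial ℤ) • (mq M).transpose :
                  Matrix E₁ E₀ (LaurentPolynomial ℤ))) j i := by
            intro i
            show -(T 1 * ((M i j : ℤ) : LaurentPolynomial ℤ)) = _
            simp [mq, Matrix.smul_apply, Matrix.transpose_apply, Matrix.map_apply, smul_eq_mul]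
          calc (∑ i, c i * ℓ i (Sum.inr j))
              = ∑ i, (((-(T 1) : LaurentPolynomial ℤ) • (mq M).transpose :
                  Matrix E₁ E₀ (LaurentPolynomial ℤ))) j i * c i :=
                Finset.sum_congr rfl fun i _ => by rw [hent i, mul_comm]
            _ = (((-(T 1) : LaurentPolynomial ℤ) • (mq M).transpose) *ᵥ c) j := by
                simp [Matrix.mulVec, dotProduct]
            _ = (y ∘ Sum.inr) j := by rw [hB]
            _ = y (Sum.inr j) := rfl
      show y ∈ Cq
      rw [hyc]
      exact Submodule.sum_mem _ fun i _ =>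
        Submodule.smul_mem _ _ (Submodule.subset_span ⟨i, rfl⟩)
  · apply Set.Subset.antisymm
    · intro x hx y hy
      exact hCform x hx y hy
    · intro x hx
      have h0 : ∀ i : E₀, x (Sum.inl i) = 0 := by
        intro i
        have h1 := hx (ℓ i) (Submodule.subset_span ⟨i, rfl⟩)
        rw [hform_ell] at h1
        exact sigma_inj σ hσ (by rw [h1, map_zero])
      have hxsum : x = ∑ j, x (Sum.inr j) •
          (Pi.single (Sum.inr j) (1 : LaurentPolynomial ℤ) : (E₀ ⊕ E₁) → LaurentPolynomial ℤ) := by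
        funext b
        rw [Finset.sum_apply]
        cases b with
        | inl i =>
          rw [h0 i]
          symm
          apply Finset.sum_eq_zero
          intro j _
          simp [Pi.single_eq_of_ne (show (Sum.inl i : E₀ ⊕ E₁) ≠ Sum.inr j by simp)]
        | inr j' =>
          rw [Finset.sum_eq_single j']
          · simp
          · intro j _ hj
            simp [Pi.single_eq_of_ne
              (show (Sum.inr j' : E₀ ⊕ E₁) ≠ Sum.inr j by simpa using hj.symm)]
          · simp
      show x ∈ Fq
      rw [hxsum]
      exact Submodule.sum_mem _ fun j _ =>
        Submodule.smul_mem _ _ (Submodule.subset_span ⟨j, rfl⟩)
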